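/- Assume f : ℝ^d → ℝ is measurable and satisfies conditions (0.1) and (0.2). Then c := inf_{θ ∈ ℝ^d} E(f²(G) e^{−θ·G + |θ|²/2}) > 0, the Hessian of v^f satisfies ∇²v^f(θ) ⪰ c I_d for every θ ∈ ℝ^d (so v^f is strongly convex), and v^f(θ) → +∞ as |θ| → +∞; consequently there exists a unique θ_⋆^f ∈ ℝ^d such that v^f(θ_⋆^f) = inf_{θ ∈ ℝ^d} v^f(θ). -/

import Mathlib

open MeasureTheory ProbabilityTheory Filter Real Topology

noncomputable section

/-- Euclidean norm on `ℝ^k`. -/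
def nrm {k : ℕ} (x : Fin k → ℝ) : ℝ := Real.sqrt (∑ i, x i ^ 2)

/-- Euclidean inner (dot) product on `ℝ^k`. -/
def dot {k : ℕ} (x y : Fin k → ℝ) : ℝ := ∑ i, x i * y i

/-- The standard Gaussian measure on `ℝ^d`. -/
def stdGaussian (d : ℕ) : Measure (Fin d → ℝ) :=
  MeasureTheory.Measure.pi fun _ => ProbabilityTheory.gaussianReal 0 1

/-- `v^f(θ) = E(f²(G) e^{-θ·G + |θ|²/2})`. -/
def vF {d : ℕ} (f : (Fin d → ℝ) → ℝ) (θ : Fin d → ℝ) : ℝ :=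
  ∫ x, f x ^ 2 * Real.exp (-(dot θ x) + nrm θ ^ 2 / 2) ∂ stdGaussian d

/-- `v^{f,A}(ϑ) = v^f(Aϑ)`. -/
def vFA {d d' : ℕ} (A : Matrix (Fin d) (Fin d') ℝ) (f : (Fin d → ℝ) → ℝ)
    (ϑ : Fin d' → ℝ) : ℝ :=
  vF f (A.mulVec ϑ)

/-- The sample average approximation `v_n^{f,A}`. -/
def vnFA {d d' : ℕ} {Ω : Type*} (Gs : ℕ → Ω → Fin d → ℝ)
    (A : Matrix (Fin d) (Fin d') ℝ) (f : (Fin d → ℝ) → ℝ) (n : ℕ) (ω : Ω)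
    (ϑ : Fin d' → ℝ) : ℝ :=
  (1 / n : ℝ) * ∑ i ∈ Finset.range n,
    f (Gs i ω) ^ 2 * Real.exp (-(dot (A.mulVec ϑ) (Gs i ω)) + nrm (A.mulVec ϑ) ^ 2 / 2)

/-- The importance sampling estimator `M_n(θ, g)`. -/
def Mn {d : ℕ} {Ω : Type*} (Gs : ℕ → Ω → Fin d → ℝ) (n : ℕ) (θ : Fin d → ℝ)
    (g : (Fin d → ℝ) → ℝ) (ω : Ω) : ℝ :=
  (1 / n : ℝ) * ∑ i ∈ Finset.range n,
    g (Gs i ω + θ) * Real.exp (-(dot θ (Gs i ω)) - nrm θ ^ 2 / 2)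

/-- The Hölder class `ℋ_α`. -/
def MemH {d : ℕ} (α : ℝ) (g : (Fin d → ℝ) → ℝ) : Prop :=
  ∃ β ∈ Set.Ico (0 : ℝ) 2, ∃ lam > (0 : ℝ),
    (∀ x, |g x| ≤ lam * Real.exp (nrm x ^ β)) ∧
    ∀ x y, |g x - g y| ≤ lam * Real.exp (max (nrm x ^ β) (nrm y ^ β)) * nrm (x - y) ^ α

/-- `𝒜`-monotonicity of a function on `ℝ^d` for a vector `𝒜 ∈ ℝ^d`. -/
def AMonotonic {d : ℕ} (𝒜 : Fin d → ℝ) (h : (Fin d → ℝ) → ℝ) : Prop :=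
  (∀ x, Monotone fun ϑ : ℝ => h (x + ϑ • 𝒜)) ∨ (∀ x, Antitone fun ϑ : ℝ => h (x + ϑ • 𝒜))

/-- The class `𝒱_𝒜`. -/
def MemV {d : ℕ} (𝒜 : Fin d → ℝ) (h : (Fin d → ℝ) → ℝ) : Prop :=
  ∃ g₁ g₂ : (Fin d → ℝ) → ℝ, h = g₁ + g₂ ∧ AMonotonic 𝒜 g₁ ∧ AMonotonic 𝒜 g₂ ∧
    ∃ lam > (0 : ℝ), ∃ β ∈ Set.Ico (0 : ℝ) 2,
      ∀ x, |g₁ x| ≤ lam * Real.exp (nrm x ^ β) ∧ |g₂ x| ≤ lam * Real.exp (nrm x ^ β)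



section aux
variable {d : ℕ}

lemma dot_comm (x y : Fin d → ℝ) : dot x y = dot y x := by
  simp [dot, mul_comm]

lemma dot_sub_left (x y z : Fin d → ℝ) : dot (x - y) z = dot x z - dot y z := by
  simp [dot, sub_mul, Finset.sum_sub_distrib]

lemma dot_add_left (x y z : Fin d → ℝ) : dot (x + y) z = dot x z + dot y z := by
  simp [dot, add_mul, Finset.sum_add_distrib]

lemma dot_smul_left (c : ℝ) (x z : Fin d → ℝ) : dot (c • x) z = c * dot x z := by
  simp [dot, Finset.mul_sum, mul_assoc]

lemma nrm_nonneg (x : Fin d → ℝ) : 0 ≤ nrm x := Real.sqrt_nonneg _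

lemma nrm_sq (x : Fin d → ℝ) : nrm x ^ 2 = ∑ i, x i ^ 2 :=
  Real.sq_sqrt (Finset.sum_nonneg fun i _ => sq_nonneg _)

lemma dot_self (x : Fin d → ℝ) : dot x x = nrm x ^ 2 := by
  rw [nrm_sq]; simp [dot, sq]

lemma dot_le_nrm_mul_nrm (x y : Fin d → ℝ) : dot x y ≤ nrm x * nrm y :=
  Real.sum_mul_le_sqrt_mul_sqrt _ _ _

lemma abs_dot_le (x y : Fin d → ℝ) : |dot x y| ≤ (∑ i, |x i|) * (∑ i, |y i|) := by
  calc |dot x y| ≤ ∑ i, |x i * y i| := Finset.abs_sum_le_sum_abs _ _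
  _ = ∑ i, |x i| * |y i| := by simp [abs_mul]
  _ ≤ (∑ i, |x i|) * (∑ i, |y i|) := by
      rw [Finset.sum_mul]
      refine Finset.sum_le_sum fun i _ => ?_
      exact mul_le_mul_of_nonneg_left (Finset.single_le_sum (f := fun j => |y j|) (fun j _ => abs_nonneg _) (Finset.mem_univ i)) (abs_nonneg _)

lemma nrm_le_sum_abs (x : Fin d → ℝ) : nrm x ≤ ∑ i, |x i| := by
  rw [nrm]
  have h1 : (∑ i, x i ^ 2) ≤ (∑ i, |x i|) ^ 2 := by
    have := Finset.sum_sq_le_sq_sum_of_nonneg (s := Finset.univ) (f := fun i => |x i|)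
      (fun i _ => abs_nonneg _)
    simpa [sq_abs] using this
  calc Real.sqrt (∑ i, x i ^ 2) ≤ Real.sqrt ((∑ i, |x i|) ^ 2) := Real.sqrt_le_sqrt h1
  _ = ∑ i, |x i| := Real.sqrt_sq (Finset.sum_nonneg fun i _ => abs_nonneg _)

lemma nrm_eq_norm (x : Fin d → ℝ) : nrm x = ‖(WithLp.equiv 2 (Fin d → ℝ)).symm x‖ := by
  rw [EuclideanSpace.norm_eq]
  simp [nrm, Real.norm_eq_abs, sq_abs]

lemma nrm_triangle (x y : Fin d → ℝ) : nrm x ≤ nrm y + nrm (x - y) := by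
  rw [nrm_eq_norm, nrm_eq_norm, nrm_eq_norm, WithLp.equiv_symm_apply, WithLp.toLp_sub]
  exact norm_le_norm_add_norm_sub' _ _

def dotCLM (w : Fin d → ℝ) : (Fin d → ℝ) →L[ℝ] ℝ :=
  ∑ i, w i • (ContinuousLinearMap.proj i : (Fin d → ℝ) →L[ℝ] ℝ)

lemma dotCLM_apply (w x : Fin d → ℝ) : dotCLM w x = dot w x := by
  simp [dotCLM, dot, ContinuousLinearMap.sum_apply]

lemma dotCLM_sub (w v : Fin d → ℝ) : dotCLM (w - v) = dotCLM w - dotCLM v := by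
  ext x
  simp [dotCLM_apply, dot_sub_left]

lemma norm_dotCLM_le (w : Fin d → ℝ) : ‖dotCLM w‖ ≤ ∑ i, |w i| := by
  refine ContinuousLinearMap.opNorm_le_bound _ (Finset.sum_nonneg fun i _ => abs_nonneg _) ?_
  intro x
  rw [dotCLM_apply]
  calc |dot w x| ≤ ∑ i, |w i| * |x i| := by
        refine (Finset.abs_sum_le_sum_abs _ _).trans ?_
        simp [abs_mul, le_refl]
  _ ≤ ∑ i, |w i| * ‖x‖ := by
        refine Finset.sum_le_sum fun i _ => ?_
        exact mul_le_mul_of_nonneg_left ((Real.norm_eq_abs (x i) ▸ norm_le_pi_norm x i)) (abs_nonneg _)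
  _ = (∑ i, |w i|) * ‖x‖ := by rw [Finset.sum_mul]

lemma hasFDerivAt_dot_right (x θ : Fin d → ℝ) :
    HasFDerivAt (fun θ' => dot θ' x) (dotCLM x) θ := by
  have : (fun θ' : Fin d → ℝ => dot θ' x) = fun θ' => dotCLM x θ' := by
    funext θ'; rw [dotCLM_apply, dot_comm]
  rw [this]
  exact (dotCLM x).hasFDerivAt

lemma hasFDerivAt_half_nrm_sq (θ : Fin d → ℝ) :
    HasFDerivAt (fun θ' => nrm θ' ^ 2 / 2) (dotCLM θ) θ := by
  have h : (fun θ' : Fin d → ℝ => nrm θ' ^ 2 / 2) = fun θ' => ∑ i, (θ' i ^ 2 / 2) := by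
    funext θ'; rw [nrm_sq, Finset.sum_div]
  rw [h, dotCLM]
  refine HasFDerivAt.fun_sum fun i _ => ?_
  have h1 : HasDerivAt (fun t : ℝ => t ^ 2 / 2) (θ i) (θ i) := by
    have := (hasDerivAt_pow 2 (θ i)).div_const 2
    simpa using this
  have h2 : HasFDerivAt (fun θ' : Fin d → ℝ => θ' i)
      (ContinuousLinearMap.proj i : (Fin d → ℝ) →L[ℝ] ℝ) θ :=
    (ContinuousLinearMap.proj i : (Fin d → ℝ) →L[ℝ] ℝ).hasFDerivAt
  exact h1.comp_hasFDerivAt θ h2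

lemma hasFDerivAt_K (x θ : Fin d → ℝ) :
    HasFDerivAt (fun θ' => -(dot θ' x) + nrm θ' ^ 2 / 2) (dotCLM (θ - x)) θ := by
  rw [dotCLM_sub, sub_eq_neg_add]
  exact (hasFDerivAt_dot_right x θ).neg.add (hasFDerivAt_half_nrm_sq θ)

lemma hasFDerivAt_integrand (f : (Fin d → ℝ) → ℝ) (x θ : Fin d → ℝ) :
    HasFDerivAt (fun θ' => f x ^ 2 * Real.exp (-(dot θ' x) + nrm θ' ^ 2 / 2))
      ((f x ^ 2 * Real.exp (-(dot θ x) + nrm θ ^ 2 / 2)) • dotCLM (θ - x)) θ := by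
  have h := ((hasFDerivAt_K x θ).exp).const_mul (f x ^ 2)
  simpa [smul_smul, mul_comm] using h

lemma measurable_expdot (θ₀ : Fin d → ℝ) : Measurable fun x : Fin d → ℝ => dot θ₀ x :=
  Finset.measurable_sum _ fun i _ => (measurable_pi_apply i).const_mul _

lemma integrable_master {f : (Fin d → ℝ) → ℝ} (hf : Measurable f)
    (h02 : ∀ θ : Fin d → ℝ,
      Integrable (fun x => f x ^ 2 * Real.exp (-(dot θ x))) (stdGaussian d))
    (a : ℝ) (θ₀ : Fin d → ℝ) :
    Integrable (fun x => f x ^ 2 * Real.exp ((a * ∑ i, |x i|) - dot θ₀ x)) (stdGaussian d) := by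
  classical
  set ψ : Finset (Fin d) → Fin d → ℝ := fun T i => if i ∈ T then a else -a with hψ
  set S : (Fin d → ℝ) → ℝ := fun x =>
    ∑ T ∈ (Finset.univ : Finset (Fin d)).powerset,
      f x ^ 2 * Real.exp (dot (ψ T) x - dot θ₀ x) with hSdef
  have hS : Integrable S (stdGaussian d) := by
    refine integrable_finset_sum _ fun T _ => ?_
    have := h02 (θ₀ - ψ T)
    simpa [dot_sub_left, neg_sub] using this
  have hmeas : AEStronglyMeasurable
      (fun x : Fin d → ℝ => f x ^ 2 * Real.exp ((a * ∑ i, |x i|) - dot θ₀ x)) (stdGaussian d) := by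
    refine Measurable.aestronglyMeasurable ?_
    refine ((hf.pow_const 2).mul (Measurable.exp ?_))
    refine Measurable.sub ?_ (measurable_expdot θ₀)
    exact (Finset.measurable_sum _ fun i _ => (measurable_pi_apply i).abs).const_mul a
  refine hS.mono hmeas (Filter.Eventually.of_forall fun x => ?_)
  have hkey : Real.exp (a * ∑ i, |x i|) ≤ ∑ T ∈ (Finset.univ : Finset (Fin d)).powerset,
      Real.exp (dot (ψ T) x) := by
    have h1 : Real.exp (a * ∑ i, |x i|) = ∏ i, Real.exp (a * |x i|) := by
      rw [Finset.mul_sum, Real.exp_sum]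
    have h2 : ∏ i, Real.exp (a * |x i|) ≤
        ∏ i, (Real.exp (a * x i) + Real.exp (-(a * x i))) := by
      refine Finset.prod_le_prod (fun i _ => (Real.exp_pos _).le) (fun i _ => ?_)
      rcases abs_cases (x i) with ⟨h, _⟩ | ⟨h, _⟩
      · rw [h]; exact le_add_of_nonneg_right (Real.exp_pos _).le
      · rw [h, mul_neg, ← neg_mul]
        exact le_add_of_nonneg_left (Real.exp_pos _).le
    have h3 : ∏ i, (Real.exp (a * x i) + Real.exp (-(a * x i))) =
        ∑ T ∈ (Finset.univ : Finset (Fin d)).powerset, Real.exp (dot (ψ T) x) := by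
      rw [Finset.prod_add]
      refine Finset.sum_congr rfl fun T hT => ?_
      rw [← Real.exp_sum, ← Real.exp_sum, ← Real.exp_add]
      congr 1
      have : dot (ψ T) x = ∑ i ∈ T, a * x i + ∑ i ∈ Finset.univ \ T, -(a * x i) := by
        rw [dot, ← Finset.sum_add_sum_compl T (fun i => ψ T i * x i),
          Finset.compl_eq_univ_sdiff]
        congr 1
        · exact Finset.sum_congr rfl fun i hi => by simp [hψ, hi]
        · refine Finset.sum_congr rfl fun i hi => ?_
          have : i ∉ T := (Finset.mem_sdiff.mp hi).2
          simp [hψ, this]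
      rw [this]
    rw [h1]; exact h2.trans (h3.symm ▸ le_refl _)
  have hnn : 0 ≤ f x ^ 2 * Real.exp ((a * ∑ i, |x i|) - dot θ₀ x) := by positivity
  rw [Real.norm_eq_abs, abs_of_nonneg hnn, Real.norm_eq_abs]
  have hSx : f x ^ 2 * Real.exp ((a * ∑ i, |x i|) - dot θ₀ x) ≤ S x := by
    have : S x = f x ^ 2 * ((∑ T ∈ (Finset.univ : Finset (Fin d)).powerset,
        Real.exp (dot (ψ T) x)) * Real.exp (-(dot θ₀ x))) := by
      rw [hSdef]
      simp only [Finset.sum_mul, Finset.mul_sum]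
      refine Finset.sum_congr rfl fun T _ => ?_
      rw [← Real.exp_add, sub_eq_add_neg]
    rw [this, Real.exp_sub, div_eq_mul_inv, ← Real.exp_neg]
    refine mul_le_mul_of_nonneg_left ?_ (sq_nonneg _)
    exact mul_le_mul_of_nonneg_right hkey (Real.exp_pos _).le
  refine hSx.trans (le_abs_self _)

lemma sum_abs_sub_le_of_ball {θ₀ θ : Fin d → ℝ} (hθ : θ ∈ Metric.ball θ₀ 1) :
    ∑ i, |θ i - θ₀ i| ≤ d := by
  have : ∀ i, |θ i - θ₀ i| ≤ 1 := by
    intro i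
    have h1 : dist (θ i) (θ₀ i) ≤ dist θ θ₀ := dist_le_pi_dist θ θ₀ i
    have h2 : dist θ θ₀ < 1 := Metric.mem_ball.mp hθ
    rw [Real.dist_eq] at h1
    linarith
  calc ∑ i, |θ i - θ₀ i| ≤ ∑ _i : Fin d, (1:ℝ) := Finset.sum_le_sum fun i _ => this i
  _ = d := by simp

lemma K_bound {θ₀ θ : Fin d → ℝ} (hθ : θ ∈ Metric.ball θ₀ 1) (x : Fin d → ℝ) :
    -(dot θ x) + nrm θ ^ 2 / 2 ≤
      (nrm θ₀ + d) ^ 2 / 2 + (((d:ℝ) * ∑ i, |x i|) - dot θ₀ x) := by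
  have h1 : -(dot θ x) ≤ -(dot θ₀ x) + (d:ℝ) * ∑ i, |x i| := by
    have hsub : dot θ x = dot θ₀ x + dot (θ - θ₀) x := by
      rw [dot_sub_left]; ring
    have h2 : |dot (θ - θ₀) x| ≤ (∑ i, |θ i - θ₀ i|) * ∑ i, |x i| := by
      simpa using abs_dot_le (θ - θ₀) x
    have h3 : (∑ i, |θ i - θ₀ i|) * (∑ i, |x i|) ≤ (d:ℝ) * ∑ i, |x i| :=
      mul_le_mul_of_nonneg_right (sum_abs_sub_le_of_ball hθ)
        (Finset.sum_nonneg fun i _ => abs_nonneg _)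
    have h4 : -(dot (θ - θ₀) x) ≤ (d:ℝ) * ∑ i, |x i| := by
      have := neg_abs_le (dot (θ - θ₀) x)
      linarith
    rw [hsub]; linarith
  have h5 : nrm θ ≤ nrm θ₀ + d := by
    have := nrm_triangle θ θ₀
    have h6 : nrm (θ - θ₀) ≤ ∑ i, |(θ - θ₀) i| := nrm_le_sum_abs _
    have h7 : (∑ i, |(θ - θ₀) i|) ≤ (d:ℝ) := by
      simpa using sum_abs_sub_le_of_ball hθ
    linarith
  have h8 : nrm θ ^ 2 / 2 ≤ (nrm θ₀ + d) ^ 2 / 2 := by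
    have h9 := nrm_nonneg θ
    nlinarith
  linarith

variable {f : (Fin d → ℝ) → ℝ}

lemma measurable_s (hf : Measurable f) (θ : Fin d → ℝ) :
    Measurable (fun x => f x ^ 2 * Real.exp (-(dot θ x) + nrm θ ^ 2 / 2)) :=
  (hf.pow_const 2).mul (((measurable_expdot θ).neg.add_const _).exp)

lemma aesm_F' (hf : Measurable f) (θ : Fin d → ℝ) :
    AEStronglyMeasurable
      (fun x => (f x ^ 2 * Real.exp (-(dot θ x) + nrm θ ^ 2 / 2)) • dotCLM (θ - x))
      (stdGaussian d) := by
  have heq : (fun x => (f x ^ 2 * Real.exp (-(dot θ x) + nrm θ ^ 2 / 2)) • dotCLM (θ - x)) =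
      fun x => (f x ^ 2 * Real.exp (-(dot θ x) + nrm θ ^ 2 / 2)) • dotCLM θ -
        ∑ i, ((f x ^ 2 * Real.exp (-(dot θ x) + nrm θ ^ 2 / 2)) * x i) •
          (ContinuousLinearMap.proj i : (Fin d → ℝ) →L[ℝ] ℝ) := by
    funext x
    rw [dotCLM_sub, smul_sub]
    congr 1
    rw [dotCLM, Finset.smul_sum]
    refine Finset.sum_congr rfl fun i _ => ?_
    rw [smul_smul]
  rw [heq]
  refine Measurable.aestronglyMeasurable ?_
  refine Measurable.sub ((measurable_s hf θ).smul_const _) ?_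
  exact Finset.measurable_sum _ fun i _ =>
    ((measurable_s hf θ).mul (measurable_pi_apply i)).smul_const _

lemma norm_F'_le (θ₀ : Fin d → ℝ) {θ : Fin d → ℝ} (hθ : θ ∈ Metric.ball θ₀ 1)
    (x : Fin d → ℝ) :
    ‖(f x ^ 2 * Real.exp (-(dot θ x) + nrm θ ^ 2 / 2)) • dotCLM (θ - x)‖ ≤
      ((∑ i, |θ₀ i|) + d + 1) * Real.exp ((nrm θ₀ + d) ^ 2 / 2) *
        (f x ^ 2 * Real.exp (((( d : ℝ) + 1) * ∑ i, |x i|) - dot θ₀ x)) := by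
  have hs : (0:ℝ) ≤ f x ^ 2 * Real.exp (-(dot θ x) + nrm θ ^ 2 / 2) := by positivity
  rw [norm_smul (f x ^ 2 * Real.exp (-(dot θ x) + nrm θ ^ 2 / 2)) (dotCLM (θ - x)),
    Real.norm_eq_abs, abs_of_nonneg hs]
  have h1 : ‖dotCLM (θ - x)‖ ≤ ((∑ i, |θ₀ i|) + d) + ∑ i, |x i| := by
    refine (norm_dotCLM_le _).trans ?_
    have : ∀ i, |(θ - x) i| ≤ |θ i - θ₀ i| + |θ₀ i| + |x i| := by
      intro i
      have : (θ - x) i = (θ i - θ₀ i) + θ₀ i + (- x i) := by simp; ring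
      rw [this]
      calc |(θ i - θ₀ i) + θ₀ i + (- x i)| ≤ |(θ i - θ₀ i) + θ₀ i| + |(- x i)| := abs_add_le _ _
      _ ≤ |θ i - θ₀ i| + |θ₀ i| + |x i| := by
          have := abs_add_le (θ i - θ₀ i) (θ₀ i)
          rw [abs_neg]; linarith
    calc ∑ i, |(θ - x) i| ≤ ∑ i, (|θ i - θ₀ i| + |θ₀ i| + |x i|) :=
          Finset.sum_le_sum fun i _ => this i
    _ = (∑ i, |θ i - θ₀ i|) + (∑ i, |θ₀ i|) + ∑ i, |x i| := by
          rw [Finset.sum_add_distrib, Finset.sum_add_distrib]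
    _ ≤ ((∑ i, |θ₀ i|) + d) + ∑ i, |x i| := by
          have := sum_abs_sub_le_of_ball hθ
          linarith
  have hB : (0:ℝ) ≤ ∑ i, |x i| := Finset.sum_nonneg fun i _ => abs_nonneg _
  have hA : (0:ℝ) ≤ (∑ i, |θ₀ i|) + d := by positivity
  have h2 : ((∑ i, |θ₀ i|) + d) + ∑ i, |x i| ≤
      ((∑ i, |θ₀ i|) + d + 1) * Real.exp (∑ i, |x i|) := by
    have he1 : (1:ℝ) ≤ Real.exp (∑ i, |x i|) := Real.one_le_exp hB
    have he2 : (∑ i, |x i|) ≤ Real.exp (∑ i, |x i|) :=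
      (Real.add_one_le_exp _).trans' (by linarith)
    nlinarith
  have h3 : Real.exp (-(dot θ x) + nrm θ ^ 2 / 2) ≤
      Real.exp ((nrm θ₀ + d) ^ 2 / 2) * Real.exp (((d:ℝ) * ∑ i, |x i|) - dot θ₀ x) := by
    rw [← Real.exp_add]
    exact Real.exp_le_exp.mpr (K_bound hθ x)
  calc f x ^ 2 * Real.exp (-(dot θ x) + nrm θ ^ 2 / 2) * ‖dotCLM (θ - x)‖ ≤
      f x ^ 2 * (Real.exp ((nrm θ₀ + d) ^ 2 / 2) * Real.exp (((d:ℝ) * ∑ i, |x i|) - dot θ₀ x)) *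
        (((∑ i, |θ₀ i|) + d + 1) * Real.exp (∑ i, |x i|)) := by
          have hnorm : (0:ℝ) ≤ ‖dotCLM (θ - x)‖ := norm_nonneg _
          have hfx : (0:ℝ) ≤ f x ^ 2 := sq_nonneg _
          refine mul_le_mul ?_ (h1.trans h2) hnorm (by positivity)
          exact mul_le_mul_of_nonneg_left h3 hfx
  _ = ((∑ i, |θ₀ i|) + d + 1) * Real.exp ((nrm θ₀ + d) ^ 2 / 2) *
        (f x ^ 2 * (Real.exp (((d:ℝ) * ∑ i, |x i|) - dot θ₀ x) * Real.exp (∑ i, |x i|))) := by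
      ring
  _ = _ := by
      rw [← Real.exp_add]
      congr 3
      ring

lemma integrable_vF_integrand
    (h02 : ∀ θ : Fin d → ℝ,
      Integrable (fun x => f x ^ 2 * Real.exp (-(dot θ x))) (stdGaussian d))
    (θ : Fin d → ℝ) :
    Integrable (fun x => f x ^ 2 * Real.exp (-(dot θ x) + nrm θ ^ 2 / 2)) (stdGaussian d) := by
  have heq : (fun x => f x ^ 2 * Real.exp (-(dot θ x) + nrm θ ^ 2 / 2)) =
      fun x => (f x ^ 2 * Real.exp (-(dot θ x))) * Real.exp (nrm θ ^ 2 / 2) := by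
    funext x; rw [Real.exp_add]; ring
  rw [heq]
  exact (h02 θ).mul_const _

lemma integrable_F' (hf : Measurable f)
    (h02 : ∀ θ : Fin d → ℝ,
      Integrable (fun x => f x ^ 2 * Real.exp (-(dot θ x))) (stdGaussian d))
    (θ : Fin d → ℝ) :
    Integrable
      (fun x => (f x ^ 2 * Real.exp (-(dot θ x) + nrm θ ^ 2 / 2)) • dotCLM (θ - x))
      (stdGaussian d) := by
  refine Integrable.mono' (((integrable_master hf h02 ((d:ℝ)+1) θ).const_mul
    (((∑ i, |θ i|) + d + 1) * Real.exp ((nrm θ + d) ^ 2 / 2)))) (aesm_F' hf θ)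
    (Filter.Eventually.of_forall fun x => ?_)
  exact norm_F'_le θ (Metric.mem_ball_self one_pos) x

lemma hasFDerivAt_vF (hf : Measurable f)
    (h02 : ∀ θ : Fin d → ℝ,
      Integrable (fun x => f x ^ 2 * Real.exp (-(dot θ x))) (stdGaussian d))
    (θ₀ : Fin d → ℝ) :
    HasFDerivAt (vF f)
      (∫ x, (f x ^ 2 * Real.exp (-(dot θ₀ x) + nrm θ₀ ^ 2 / 2)) • dotCLM (θ₀ - x)
        ∂ stdGaussian d) θ₀ := by
  have := hasFDerivAt_integral_of_dominated_of_fderiv_le (𝕜 := ℝ)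
    (μ := stdGaussian d) (x₀ := θ₀)
    (F := fun θ x => f x ^ 2 * Real.exp (-(dot θ x) + nrm θ ^ 2 / 2))
    (F' := fun θ x => (f x ^ 2 * Real.exp (-(dot θ x) + nrm θ ^ 2 / 2)) • dotCLM (θ - x))
    (bound := fun x => ((∑ i, |θ₀ i|) + d + 1) * Real.exp ((nrm θ₀ + d) ^ 2 / 2) *
        (f x ^ 2 * Real.exp (((( d : ℝ) + 1) * ∑ i, |x i|) - dot θ₀ x)))
    (s := Metric.ball θ₀ 1) (Metric.ball_mem_nhds θ₀ one_pos)
    (Filter.Eventually.of_forall fun θ => (measurable_s hf θ).aestronglyMeasurable)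
    (integrable_vF_integrand h02 θ₀) (aesm_F' hf θ₀)
    (Filter.Eventually.of_forall fun x => fun θ hθ => norm_F'_le θ₀ hθ x)
    ((integrable_master hf h02 ((d:ℝ)+1) θ₀).const_mul _)
    (Filter.Eventually.of_forall fun x => fun θ hθ => hasFDerivAt_integrand f x θ)
  exact this

lemma measurable_dot_right (u : Fin d → ℝ) : Measurable fun x : Fin d → ℝ => dot x u :=
  Finset.measurable_sum _ fun i _ => (measurable_pi_apply i).mul_const _

lemma sum_abs_sub_le' {θ₀ θ : Fin d → ℝ} (hθ : θ ∈ Metric.ball θ₀ 1) (x : Fin d → ℝ) :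
    ∑ i, |(θ - x) i| ≤ ((∑ i, |θ₀ i|) + d) + ∑ i, |x i| := by
  have h : ∀ i, |(θ - x) i| ≤ |θ i - θ₀ i| + |θ₀ i| + |x i| := by
    intro i
    have he : (θ - x) i = (θ i - θ₀ i) + θ₀ i + (- x i) := by simp; ring
    rw [he]
    calc |(θ i - θ₀ i) + θ₀ i + (- x i)| ≤ |(θ i - θ₀ i) + θ₀ i| + |(- x i)| := abs_add_le _ _
    _ ≤ |θ i - θ₀ i| + |θ₀ i| + |x i| := by
        have := abs_add_le (θ i - θ₀ i) (θ₀ i)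
        rw [abs_neg]; linarith
  calc ∑ i, |(θ - x) i| ≤ ∑ i, (|θ i - θ₀ i| + |θ₀ i| + |x i|) :=
        Finset.sum_le_sum fun i _ => h i
  _ = (∑ i, |θ i - θ₀ i|) + (∑ i, |θ₀ i|) + ∑ i, |x i| := by
        rw [Finset.sum_add_distrib, Finset.sum_add_distrib]
  _ ≤ ((∑ i, |θ₀ i|) + d) + ∑ i, |x i| := by
        have := sum_abs_sub_le_of_ball hθ
        linarith

lemma measurable_smul_dotCLM {b : (Fin d → ℝ) → ℝ} (hb : Measurable b) (θ : Fin d → ℝ) :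
    Measurable fun x => b x • dotCLM (θ - x) := by
  have heq : (fun x => b x • dotCLM (θ - x)) =
      fun x => b x • dotCLM θ -
        ∑ i, (b x * x i) • (ContinuousLinearMap.proj i : (Fin d → ℝ) →L[ℝ] ℝ) := by
    funext x
    rw [dotCLM_sub, smul_sub]
    congr 1
    rw [dotCLM, Finset.smul_sum]
    refine Finset.sum_congr rfl fun i _ => ?_
    rw [smul_smul]
  rw [heq]
  refine Measurable.sub (hb.smul_const _) ?_
  exact Finset.measurable_sum _ fun i _ => ((hb.mul (measurable_pi_apply i)).smul_const _)

lemma hasFDerivAt_integrand2 (f : (Fin d → ℝ) → ℝ) (u x θ : Fin d → ℝ) :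
    HasFDerivAt
      (fun θ' => (f x ^ 2 * Real.exp (-(dot θ' x) + nrm θ' ^ 2 / 2)) * dot (θ' - x) u)
      ((f x ^ 2 * Real.exp (-(dot θ x) + nrm θ ^ 2 / 2)) • dotCLM u +
        (dot (θ - x) u) •
          ((f x ^ 2 * Real.exp (-(dot θ x) + nrm θ ^ 2 / 2)) • dotCLM (θ - x))) θ := by
  have h1 := hasFDerivAt_integrand f x θ
  have h2 : HasFDerivAt (fun θ' : Fin d → ℝ => dot (θ' - x) u) (dotCLM u) θ := by
    have he : (fun θ' : Fin d → ℝ => dot (θ' - x) u) = fun θ' => dot θ' u - dot x u := by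
      funext θ'; rw [dot_sub_left]
    rw [he]
    exact (hasFDerivAt_dot_right u θ).sub_const _
  exact h1.mul h2

lemma norm_F2'_le (θ₀ u : Fin d → ℝ) {θ : Fin d → ℝ} (hθ : θ ∈ Metric.ball θ₀ 1)
    (x : Fin d → ℝ) :
    ‖(f x ^ 2 * Real.exp (-(dot θ x) + nrm θ ^ 2 / 2)) • dotCLM u +
        (dot (θ - x) u) •
          ((f x ^ 2 * Real.exp (-(dot θ x) + nrm θ ^ 2 / 2)) • dotCLM (θ - x))‖ ≤
      (∑ i, |u i|) * (1 + ((∑ i, |θ₀ i|) + d + 1) ^ 2) * Real.exp ((nrm θ₀ + d) ^ 2 / 2) *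
        (f x ^ 2 * Real.exp (((( d : ℝ) + 2) * ∑ i, |x i|) - dot θ₀ x)) := by
  set s := f x ^ 2 * Real.exp (-(dot θ x) + nrm θ ^ 2 / 2) with hs
  have hs0 : 0 ≤ s := by positivity
  set Cu := ∑ i, |u i| with hCu
  have hCu0 : 0 ≤ Cu := Finset.sum_nonneg fun i _ => abs_nonneg _
  set A := (∑ i, |θ₀ i|) + (d:ℝ) with hA
  have hA0 : 0 ≤ A := by positivity
  set t := ∑ i, |x i| with ht
  have ht0 : 0 ≤ t := Finset.sum_nonneg fun i _ => abs_nonneg _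
  have hsub : ∑ i, |(θ - x) i| ≤ A + t := sum_abs_sub_le' hθ x
  have hd1 : ‖dotCLM u‖ ≤ Cu := norm_dotCLM_le u
  have hd2 : ‖dotCLM (θ - x)‖ ≤ A + t := (norm_dotCLM_le _).trans hsub
  have hd3 : |dot (θ - x) u| ≤ (A + t) * Cu := by
    refine (abs_dot_le _ _).trans ?_
    exact mul_le_mul_of_nonneg_right hsub hCu0
  have htri : ‖s • dotCLM u + (dot (θ - x) u) • (s • dotCLM (θ - x))‖ ≤
      s * Cu + (A + t) * Cu * (s * (A + t)) := by
    refine (norm_add_le _ _).trans ?_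
    have e1 : ‖s • dotCLM u‖ ≤ s * Cu := by
      rw [norm_smul s (dotCLM u), Real.norm_eq_abs, abs_of_nonneg hs0]
      exact mul_le_mul_of_nonneg_left hd1 hs0
    have e2 : ‖(dot (θ - x) u) • (s • dotCLM (θ - x))‖ ≤ (A + t) * Cu * (s * (A + t)) := by
      rw [norm_smul (dot (θ - x) u) (s • dotCLM (θ - x)),
        norm_smul s (dotCLM (θ - x)), Real.norm_eq_abs, Real.norm_eq_abs,
        abs_of_nonneg hs0]
      have : s * ‖dotCLM (θ - x)‖ ≤ s * (A + t) := mul_le_mul_of_nonneg_left hd2 hs0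
      refine mul_le_mul hd3 this (by positivity) (by positivity)
    linarith
  have hexp : s ≤ Real.exp ((nrm θ₀ + d) ^ 2 / 2) *
      (f x ^ 2 * Real.exp (((d:ℝ) * t) - dot θ₀ x)) := by
    rw [hs]
    have := Real.exp_le_exp.mpr (K_bound hθ x)
    rw [Real.exp_add ((nrm θ₀ + d) ^ 2 / 2) (((d:ℝ) * ∑ i, |x i|) - dot θ₀ x)] at this
    calc f x ^ 2 * Real.exp (-(dot θ x) + nrm θ ^ 2 / 2) ≤
        f x ^ 2 * (Real.exp ((nrm θ₀ + d) ^ 2 / 2) * Real.exp (((d:ℝ) * ∑ i, |x i|) - dot θ₀ x)) :=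
          mul_le_mul_of_nonneg_left this (sq_nonneg _)
    _ = _ := by rw [ht]; ring
  have hAt : A + t ≤ (A + 1) * Real.exp t := by
    have he1 : (1:ℝ) ≤ Real.exp t := Real.one_le_exp ht0
    have he2 : t ≤ Real.exp t := (Real.add_one_le_exp _).trans' (by linarith)
    nlinarith
  have hsq : (A + t) ^ 2 ≤ (A + 1) ^ 2 * Real.exp (2 * t) := by
    have := hAt
    have h2 : Real.exp (2*t) = Real.exp t * Real.exp t := by
      rw [← Real.exp_add]; ring_nf
    rw [h2]
    nlinarith [Real.exp_pos t, ht0, hA0]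
  have hone : (1:ℝ) ≤ Real.exp (2 * t) := Real.one_le_exp (by linarith)
  -- combine
  have hkey : s * Cu + (A + t) * Cu * (s * (A + t)) ≤
      Cu * (1 + (A + 1) ^ 2) * (s * Real.exp (2 * t)) := by
    have : s * Cu + (A + t) * Cu * (s * (A + t)) = Cu * (s * 1) + Cu * (s * (A+t)^2) := by ring
    rw [this]
    have g1 : s * 1 ≤ s * Real.exp (2*t) := by
      refine mul_le_mul_of_nonneg_left hone hs0
    have g2 : s * (A+t)^2 ≤ s * ((A+1)^2 * Real.exp (2*t)) :=
      mul_le_mul_of_nonneg_left hsq hs0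
    calc Cu * (s * 1) + Cu * (s * (A+t)^2) ≤
        Cu * (s * Real.exp (2*t)) + Cu * (s * ((A+1)^2 * Real.exp (2*t))) := by
          have := mul_le_mul_of_nonneg_left g1 hCu0
          have := mul_le_mul_of_nonneg_left g2 hCu0
          linarith [mul_le_mul_of_nonneg_left g1 hCu0, mul_le_mul_of_nonneg_left g2 hCu0]
    _ = Cu * (1 + (A + 1) ^ 2) * (s * Real.exp (2 * t)) := by ring
  refine htri.trans (hkey.trans ?_)
  have : s * Real.exp (2*t) ≤ Real.exp ((nrm θ₀ + d) ^ 2 / 2) *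
      (f x ^ 2 * Real.exp (((( d : ℝ) + 2) * t) - dot θ₀ x)) := by
    calc s * Real.exp (2*t) ≤ (Real.exp ((nrm θ₀ + d) ^ 2 / 2) *
        (f x ^ 2 * Real.exp (((d:ℝ) * t) - dot θ₀ x))) * Real.exp (2*t) :=
          mul_le_mul_of_nonneg_right hexp (Real.exp_pos _).le
    _ = _ := by
        rw [mul_assoc, mul_assoc, ← Real.exp_add]
        congr 3
        ring
  calc Cu * (1 + (A + 1) ^ 2) * (s * Real.exp (2*t)) ≤
      Cu * (1 + (A + 1) ^ 2) * (Real.exp ((nrm θ₀ + d) ^ 2 / 2) *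
        (f x ^ 2 * Real.exp (((( d : ℝ) + 2) * t) - dot θ₀ x))) := by
        refine mul_le_mul_of_nonneg_left this (by positivity)
  _ = _ := by rw [hA, hCu, ht]; ring

lemma aesm_F2' (hf : Measurable f) (u θ : Fin d → ℝ) :
    AEStronglyMeasurable
      (fun x => (f x ^ 2 * Real.exp (-(dot θ x) + nrm θ ^ 2 / 2)) • dotCLM u +
        (dot (θ - x) u) •
          ((f x ^ 2 * Real.exp (-(dot θ x) + nrm θ ^ 2 / 2)) • dotCLM (θ - x)))
      (stdGaussian d) := by
  refine Measurable.aestronglyMeasurable (Measurable.add ?_ ?_)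
  · exact (measurable_s hf θ).smul_const _
  · have heq : (fun x => (dot (θ - x) u) •
        ((f x ^ 2 * Real.exp (-(dot θ x) + nrm θ ^ 2 / 2)) • dotCLM (θ - x))) =
        fun x => ((dot (θ - x) u) * (f x ^ 2 * Real.exp (-(dot θ x) + nrm θ ^ 2 / 2))) •
          dotCLM (θ - x) := by
      funext x; rw [smul_smul]
    rw [heq]
    refine measurable_smul_dotCLM ?_ θ
    have hm : Measurable fun x : Fin d → ℝ => dot (θ - x) u := by
      have he : (fun x : Fin d → ℝ => dot (θ - x) u) = fun x => dot θ u - dot x u := by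
        funext x; rw [dot_sub_left]
      rw [he]
      exact (measurable_dot_right u).const_sub _
    exact hm.mul (measurable_s hf θ)

lemma integrable_F2' (hf : Measurable f)
    (h02 : ∀ θ : Fin d → ℝ,
      Integrable (fun x => f x ^ 2 * Real.exp (-(dot θ x))) (stdGaussian d))
    (u θ : Fin d → ℝ) :
    Integrable
      (fun x => (f x ^ 2 * Real.exp (-(dot θ x) + nrm θ ^ 2 / 2)) • dotCLM u +
        (dot (θ - x) u) •
          ((f x ^ 2 * Real.exp (-(dot θ x) + nrm θ ^ 2 / 2)) • dotCLM (θ - x)))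
      (stdGaussian d) := by
  refine Integrable.mono' ((integrable_master hf h02 ((d:ℝ)+2) θ).const_mul
    ((∑ i, |u i|) * (1 + ((∑ i, |θ i|) + d + 1) ^ 2) * Real.exp ((nrm θ + d) ^ 2 / 2)))
    (aesm_F2' hf u θ) (Filter.Eventually.of_forall fun x => ?_)
  exact norm_F2'_le θ u (Metric.mem_ball_self one_pos) x

lemma hasFDerivAt_g (hf : Measurable f)
    (h02 : ∀ θ : Fin d → ℝ,
      Integrable (fun x => f x ^ 2 * Real.exp (-(dot θ x))) (stdGaussian d))
    (u θ₀ : Fin d → ℝ) :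
    HasFDerivAt
      (fun θ => ∫ x, (f x ^ 2 * Real.exp (-(dot θ x) + nrm θ ^ 2 / 2)) * dot (θ - x) u
        ∂ stdGaussian d)
      (∫ x, ((f x ^ 2 * Real.exp (-(dot θ₀ x) + nrm θ₀ ^ 2 / 2)) • dotCLM u +
        (dot (θ₀ - x) u) •
          ((f x ^ 2 * Real.exp (-(dot θ₀ x) + nrm θ₀ ^ 2 / 2)) • dotCLM (θ₀ - x)))
        ∂ stdGaussian d) θ₀ := by
  have hmeasF2 : ∀ θ : Fin d → ℝ, AEStronglyMeasurable
      (fun x => (f x ^ 2 * Real.exp (-(dot θ x) + nrm θ ^ 2 / 2)) * dot (θ - x) u)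
      (stdGaussian d) := by
    intro θ
    refine Measurable.aestronglyMeasurable ((measurable_s hf θ).mul ?_)
    have he : (fun x : Fin d → ℝ => dot (θ - x) u) = fun x => dot θ u - dot x u := by
      funext x; rw [dot_sub_left]
    rw [he]
    exact (measurable_dot_right u).const_sub _
  have hintF2 : Integrable
      (fun x => (f x ^ 2 * Real.exp (-(dot θ₀ x) + nrm θ₀ ^ 2 / 2)) * dot (θ₀ - x) u)
      (stdGaussian d) := by
    refine Integrable.mono' ((integrable_F' hf h02 θ₀).norm.mul_const ‖u‖)
      (hmeasF2 θ₀) (Filter.Eventually.of_forall fun x => ?_)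
    rw [Real.norm_eq_abs, abs_mul]
    have h1 : |dot (θ₀ - x) u| = |dotCLM (θ₀ - x) u| := by rw [dotCLM_apply]
    have h2 : |dotCLM (θ₀ - x) u| ≤ ‖dotCLM (θ₀ - x)‖ * ‖u‖ := by
      have := (dotCLM (θ₀ - x)).le_opNorm u
      rwa [Real.norm_eq_abs] at this
    have hs0 : (0:ℝ) ≤ f x ^ 2 * Real.exp (-(dot θ₀ x) + nrm θ₀ ^ 2 / 2) := by positivity
    calc |f x ^ 2 * Real.exp (-(dot θ₀ x) + nrm θ₀ ^ 2 / 2)| * |dot (θ₀ - x) u| ≤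
        |f x ^ 2 * Real.exp (-(dot θ₀ x) + nrm θ₀ ^ 2 / 2)| * (‖dotCLM (θ₀ - x)‖ * ‖u‖) := by
          refine mul_le_mul_of_nonneg_left (h1 ▸ h2) (abs_nonneg _)
    _ = ‖(f x ^ 2 * Real.exp (-(dot θ₀ x) + nrm θ₀ ^ 2 / 2)) • dotCLM (θ₀ - x)‖ * ‖u‖ := by
          rw [norm_smul (f x ^ 2 * Real.exp (-(dot θ₀ x) + nrm θ₀ ^ 2 / 2)) (dotCLM (θ₀ - x)),
            Real.norm_eq_abs]
          ring
  have := hasFDerivAt_integral_of_dominated_of_fderiv_le (𝕜 := ℝ)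
    (μ := stdGaussian d) (x₀ := θ₀)
    (F := fun θ x => (f x ^ 2 * Real.exp (-(dot θ x) + nrm θ ^ 2 / 2)) * dot (θ - x) u)
    (F' := fun θ x => (f x ^ 2 * Real.exp (-(dot θ x) + nrm θ ^ 2 / 2)) • dotCLM u +
        (dot (θ - x) u) •
          ((f x ^ 2 * Real.exp (-(dot θ x) + nrm θ ^ 2 / 2)) • dotCLM (θ - x)))
    (bound := fun x => (∑ i, |u i|) * (1 + ((∑ i, |θ₀ i|) + d + 1) ^ 2) *
        Real.exp ((nrm θ₀ + d) ^ 2 / 2) *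
        (f x ^ 2 * Real.exp (((( d : ℝ) + 2) * ∑ i, |x i|) - dot θ₀ x)))
    (s := Metric.ball θ₀ 1) (Metric.ball_mem_nhds θ₀ one_pos)
    (Filter.Eventually.of_forall hmeasF2) hintF2 (aesm_F2' hf u θ₀)
    (Filter.Eventually.of_forall fun x => fun θ hθ => norm_F2'_le θ₀ u hθ x)
    ((integrable_master hf h02 ((d:ℝ)+2) θ₀).const_mul _)
    (Filter.Eventually.of_forall fun x => fun θ hθ => hasFDerivAt_integrand2 f u x θ)
  exact this

lemma fderiv_vF_apply (hf : Measurable f)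
    (h02 : ∀ θ : Fin d → ℝ,
      Integrable (fun x => f x ^ 2 * Real.exp (-(dot θ x))) (stdGaussian d))
    (θ u : Fin d → ℝ) :
    fderiv ℝ (vF f) θ u =
      ∫ x, (f x ^ 2 * Real.exp (-(dot θ x) + nrm θ ^ 2 / 2)) * dot (θ - x) u
        ∂ stdGaussian d := by
  rw [(hasFDerivAt_vF hf h02 θ).fderiv,
    ContinuousLinearMap.integral_apply (integrable_F' hf h02 θ)]
  refine integral_congr_ae (Filter.Eventually.of_forall fun x => ?_)
  simp [dotCLM_apply]

lemma fderiv2_vF (hf : Measurable f)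
    (h02 : ∀ θ : Fin d → ℝ,
      Integrable (fun x => f x ^ 2 * Real.exp (-(dot θ x))) (stdGaussian d))
    (θ u : Fin d → ℝ) :
    fderiv ℝ (fun θ' => fderiv ℝ (vF f) θ' u) θ u =
      ∫ x, (f x ^ 2 * Real.exp (-(dot θ x) + nrm θ ^ 2 / 2)) *
        ((dot (θ - x) u) ^ 2 + nrm u ^ 2) ∂ stdGaussian d := by
  have hfun : (fun θ' => fderiv ℝ (vF f) θ' u) =
      fun θ' => ∫ x, (f x ^ 2 * Real.exp (-(dot θ' x) + nrm θ' ^ 2 / 2)) * dot (θ' - x) u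
        ∂ stdGaussian d :=
    funext fun θ' => fderiv_vF_apply hf h02 θ' u
  rw [hfun, (hasFDerivAt_g hf h02 u θ).fderiv,
    ContinuousLinearMap.integral_apply (integrable_F2' hf h02 u θ)]
  refine integral_congr_ae (Filter.Eventually.of_forall fun x => ?_)
  simp only [ContinuousLinearMap.add_apply, ContinuousLinearMap.smul_apply, dotCLM_apply,
    smul_eq_mul]
  rw [dot_self]
  ring

lemma hessian_ge (hf : Measurable f)
    (h02 : ∀ θ : Fin d → ℝ,
      Integrable (fun x => f x ^ 2 * Real.exp (-(dot θ x))) (stdGaussian d))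
    (θ u : Fin d → ℝ) :
    vF f θ * nrm u ^ 2 ≤ fderiv ℝ (fun θ' => fderiv ℝ (vF f) θ' u) θ u := by
  rw [fderiv2_vF hf h02 θ u]
  have hInt2 : Integrable (fun x => (f x ^ 2 * Real.exp (-(dot θ x) + nrm θ ^ 2 / 2)) *
      ((dot (θ - x) u) ^ 2 + nrm u ^ 2)) (stdGaussian d) := by
    have := (integrable_F2' hf h02 u θ).apply_continuousLinearMap u
    refine this.congr (Filter.Eventually.of_forall fun x => ?_)
    simp only [ContinuousLinearMap.add_apply, ContinuousLinearMap.smul_apply, dotCLM_apply,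
      smul_eq_mul]
    rw [dot_self]
    ring
  have hInt1 : Integrable (fun x => (f x ^ 2 * Real.exp (-(dot θ x) + nrm θ ^ 2 / 2)) *
      nrm u ^ 2) (stdGaussian d) := (integrable_vF_integrand h02 θ).mul_const _
  have : vF f θ * nrm u ^ 2 =
      ∫ x, (f x ^ 2 * Real.exp (-(dot θ x) + nrm θ ^ 2 / 2)) * nrm u ^ 2 ∂ stdGaussian d := by
    rw [vF, ← integral_mul_const]
  rw [this]
  refine integral_mono hInt1 hInt2 fun x => ?_
  have hs0 : (0:ℝ) ≤ f x ^ 2 * Real.exp (-(dot θ x) + nrm θ ^ 2 / 2) := by positivity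
  refine mul_le_mul_of_nonneg_left ?_ hs0
  nlinarith [sq_nonneg (dot (θ - x) u)]

lemma stdGaussian_isProb : IsProbabilityMeasure (stdGaussian d) := by
  unfold _root_.stdGaussian; infer_instance

lemma measurable_nrm : Measurable (nrm : (Fin d → ℝ) → ℝ) := by
  refine Real.continuous_sqrt.measurable.comp ?_
  exact Finset.measurable_sum _ fun i _ => (measurable_pi_apply i).pow_const 2

lemma vF_nonneg (θ : Fin d → ℝ) : 0 ≤ vF f θ :=
  integral_nonneg fun x => by positivity

lemma vF_lower (hf : Measurable f) (h01 : 0 < stdGaussian d {x | f x ≠ 0})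
    (h02 : ∀ θ : Fin d → ℝ,
      Integrable (fun x => f x ^ 2 * Real.exp (-(dot θ x))) (stdGaussian d)) :
    ∃ κ > (0:ℝ), ∃ R : ℝ, 0 ≤ R ∧
      ∀ θ, κ * Real.exp (nrm θ ^ 2 / 2 - R * nrm θ) ≤ vF f θ := by
  haveI := stdGaussian_isProb (d := d)
  classical
  set A : ℕ → Set (Fin d → ℝ) :=
    fun n => {x | ((n:ℝ)+1)⁻¹ ≤ |f x|} ∩ {x | nrm x ≤ n} with hA
  have hAmeas : ∀ n, MeasurableSet (A n) := fun n =>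
    (measurableSet_le measurable_const hf.abs).inter
      (measurableSet_le measurable_nrm measurable_const)
  have hcover : {x | f x ≠ 0} ⊆ ⋃ n, A n := by
    intro x hx
    have hfx : 0 < |f x| := abs_pos.mpr hx
    obtain ⟨n₁, hn₁⟩ := exists_nat_ge (|f x|)⁻¹
    obtain ⟨n₂, hn₂⟩ := exists_nat_ge (nrm x)
    refine Set.mem_iUnion.mpr ⟨max n₁ n₂, ?_, ?_⟩
    · have h1 : (|f x|)⁻¹ ≤ (max n₁ n₂ : ℕ) + 1 := by
        have : (n₁:ℝ) ≤ ((max n₁ n₂ : ℕ) : ℝ) := by exact_mod_cast Nat.le_max_left n₁ n₂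
        linarith
      have := inv_anti₀ (by positivity) h1
      rwa [inv_inv] at this
    · have : (n₂:ℝ) ≤ ((max n₁ n₂ : ℕ) : ℝ) := by exact_mod_cast Nat.le_max_right n₁ n₂
      simp only [Set.mem_setOf_eq]
      linarith
  have hex : ∃ n, 0 < stdGaussian d (A n) := by
    by_contra hcon
    push_neg at hcon
    have hz : ∀ n, stdGaussian d (A n) = 0 := fun n => le_antisymm (hcon n) bot_le
    have : stdGaussian d (⋃ n, A n) = 0 := measure_iUnion_null (μ := stdGaussian d) hz
    have hle := measure_mono (μ := stdGaussian d) hcover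
    rw [this] at hle
    exact absurd (le_antisymm hle bot_le) (ne_of_gt h01)
  obtain ⟨n, hn⟩ := hex
  have hfin : stdGaussian d (A n) < ⊤ := measure_lt_top _ _
  refine ⟨(((n:ℝ)+1)⁻¹) ^ 2 * (stdGaussian d (A n)).toReal, ?_, n, Nat.cast_nonneg n, ?_⟩
  · have : 0 < (stdGaussian d (A n)).toReal := ENNReal.toReal_pos (ne_of_gt hn) (ne_of_lt hfin)
    positivity
  · intro θ
    set c : ℝ := (((n:ℝ)+1)⁻¹) ^ 2 * Real.exp (nrm θ ^ 2 / 2 - n * nrm θ) with hc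
    have hc0 : 0 ≤ c := by positivity
    have hind : ∀ x, (A n).indicator (fun _ => c) x ≤
        f x ^ 2 * Real.exp (-(dot θ x) + nrm θ ^ 2 / 2) := by
      intro x
      by_cases hx : x ∈ A n
      · rw [Set.indicator_of_mem hx]
        obtain ⟨hx1, hx2⟩ := hx
        have hf2 : (((n:ℝ)+1)⁻¹) ^ 2 ≤ f x ^ 2 := by
          have h0 : (0:ℝ) ≤ ((n:ℝ)+1)⁻¹ := by positivity
          calc (((n:ℝ)+1)⁻¹) ^ 2 ≤ |f x| ^ 2 := by
                exact pow_le_pow_left₀ h0 hx1 2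
          _ = f x ^ 2 := sq_abs _
        have hexp : Real.exp (nrm θ ^ 2 / 2 - n * nrm θ) ≤
            Real.exp (-(dot θ x) + nrm θ ^ 2 / 2) := by
          refine Real.exp_le_exp.mpr ?_
          have h1 : dot θ x ≤ nrm θ * nrm x := dot_le_nrm_mul_nrm θ x
          have h2 : nrm θ * nrm x ≤ nrm θ * n :=
            mul_le_mul_of_nonneg_left hx2 (nrm_nonneg θ)
          have : dot θ x ≤ n * nrm θ := by
            calc dot θ x ≤ nrm θ * n := h1.trans h2
            _ = n * nrm θ := by ring
          linarith
        rw [hc]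
        calc (((n:ℝ)+1)⁻¹) ^ 2 * Real.exp (nrm θ ^ 2 / 2 - n * nrm θ) ≤
            f x ^ 2 * Real.exp (nrm θ ^ 2 / 2 - n * nrm θ) :=
              mul_le_mul_of_nonneg_right hf2 (Real.exp_pos _).le
        _ ≤ f x ^ 2 * Real.exp (-(dot θ x) + nrm θ ^ 2 / 2) :=
              mul_le_mul_of_nonneg_left hexp (sq_nonneg _)
      · rw [Set.indicator_of_notMem hx]
        positivity
    have hint_ind : Integrable ((A n).indicator (fun _ => c)) (stdGaussian d) :=
      (integrable_const c).indicator (hAmeas n)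
    have := integral_mono hint_ind (integrable_vF_integrand h02 θ) hind
    rw [integral_indicator_const c (hAmeas n)] at this
    calc (((n:ℝ)+1)⁻¹) ^ 2 * (stdGaussian d (A n)).toReal *
        Real.exp (nrm θ ^ 2 / 2 - n * nrm θ) =
        (stdGaussian d (A n)).toReal • c := by rw [hc, smul_eq_mul]; ring
    _ ≤ vF f θ := this

lemma vF_large_of_nrm_large (hf : Measurable f)
    {κ R : ℝ} (hκ : 0 < κ) (hR : 0 ≤ R)
    (hbd : ∀ θ, κ * Real.exp (nrm θ ^ 2 / 2 - R * nrm θ) ≤ vF f θ)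
    (M : ℝ) :
    ∀ θ : Fin d → ℝ, max (2*R+2) (M/κ) ≤ nrm θ → M + κ ≤ vF f θ := by
  intro θ hθ
  set r := max (2*R+2) (M/κ) with hr
  have hr1 : 2*R+2 ≤ r := le_max_left _ _
  have hr2 : M/κ ≤ r := le_max_right _ _
  have ht : r ≤ nrm θ := hθ
  have h0 : 0 < r := lt_of_lt_of_le (by linarith) hr1
  have hexp1 : r ≤ nrm θ ^ 2 / 2 - R * nrm θ := by nlinarith
  have hexp2 : Real.exp r ≤ Real.exp (nrm θ ^ 2 / 2 - R * nrm θ) := Real.exp_le_exp.mpr hexp1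
  have h3 : r + 1 ≤ Real.exp r := Real.add_one_le_exp r
  have h4 : M + κ ≤ κ * (r + 1) := by
    have : M ≤ κ * r := by
      rw [div_le_iff₀ hκ] at hr2
      linarith
    nlinarith
  calc M + κ ≤ κ * (r+1) := h4
  _ ≤ κ * Real.exp r := mul_le_mul_of_nonneg_left h3 hκ.le
  _ ≤ κ * Real.exp (nrm θ ^ 2 / 2 - R * nrm θ) := mul_le_mul_of_nonneg_left hexp2 hκ.le
  _ ≤ vF f θ := hbd θ

lemma pi_norm_le_nrm (θ : Fin d → ℝ) : ‖θ‖ ≤ nrm θ := by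
  refine (pi_norm_le_iff_of_nonneg (nrm_nonneg θ)).mpr fun i => ?_
  rw [Real.norm_eq_abs, ← Real.sqrt_sq_eq_abs]
  exact Real.sqrt_le_sqrt (Finset.single_le_sum (f := fun j => θ j ^ 2)
    (fun j _ => sq_nonneg _) (Finset.mem_univ i))

lemma vF_midpoint_lt (hf : Measurable f) (h01 : 0 < stdGaussian d {x | f x ≠ 0})
    (h02 : ∀ θ : Fin d → ℝ,
      Integrable (fun x => f x ^ 2 * Real.exp (-(dot θ x))) (stdGaussian d))
    {θ₁ θ₂ : Fin d → ℝ} (hne : θ₁ ≠ θ₂) :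
    vF f ((1/2 : ℝ) • θ₁ + (1/2 : ℝ) • θ₂) <
      1/2 * vF f θ₁ + 1/2 * vF f θ₂ := by
  set mid := (1/2 : ℝ) • θ₁ + (1/2 : ℝ) • θ₂ with hmid
  set D := (∑ i, (θ₁ i - θ₂ i) ^ 2) / 8 with hDdef
  have hD0 : 0 < D := by
    rw [hDdef]
    have : 0 < ∑ i, (θ₁ i - θ₂ i) ^ 2 := by
      obtain ⟨i, hi⟩ := Function.ne_iff.mp hne
      refine Finset.sum_pos' (fun j _ => sq_nonneg _) ⟨i, Finset.mem_univ i, ?_⟩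
      exact sq_pos_of_ne_zero (sub_ne_zero.mpr hi)
    linarith
  have hKmid : ∀ x, -(dot mid x) + nrm mid ^ 2 / 2 =
      ((-(dot θ₁ x) + nrm θ₁ ^ 2 / 2) + (-(dot θ₂ x) + nrm θ₂ ^ 2 / 2)) / 2 - D := by
    intro x
    have hdot : dot mid x = (dot θ₁ x + dot θ₂ x) / 2 := by
      rw [hmid, dot_add_left, dot_smul_left, dot_smul_left]; ring
    have hsum : ∑ i, mid i ^ 2 =
        ∑ i, ((θ₁ i ^ 2 + θ₂ i ^ 2) / 2 - (θ₁ i - θ₂ i) ^ 2 / 4) := by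
      refine Finset.sum_congr rfl fun i _ => ?_
      have : mid i = (θ₁ i + θ₂ i) / 2 := by
        rw [hmid]; simp; ring
      rw [this]; ring
    rw [nrm_sq, nrm_sq, nrm_sq, hdot, hsum, Finset.sum_sub_distrib,
      ← Finset.sum_div, ← Finset.sum_div, Finset.sum_add_distrib, hDdef]
    ring
  set g : (Fin d → ℝ) → ℝ := fun x =>
    1/2 * (f x ^ 2 * Real.exp (-(dot θ₁ x) + nrm θ₁ ^ 2 / 2)) +
    1/2 * (f x ^ 2 * Real.exp (-(dot θ₂ x) + nrm θ₂ ^ 2 / 2)) -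
    f x ^ 2 * Real.exp (-(dot mid x) + nrm mid ^ 2 / 2) with hg
  have hamgm : ∀ x, Real.exp ((( -(dot θ₁ x) + nrm θ₁ ^ 2 / 2) +
      (-(dot θ₂ x) + nrm θ₂ ^ 2 / 2)) / 2) ≤
      1/2 * Real.exp (-(dot θ₁ x) + nrm θ₁ ^ 2 / 2) +
      1/2 * Real.exp (-(dot θ₂ x) + nrm θ₂ ^ 2 / 2) := by
    intro x
    set a := -(dot θ₁ x) + nrm θ₁ ^ 2 / 2
    set b := -(dot θ₂ x) + nrm θ₂ ^ 2 / 2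
    have h1 : Real.exp ((a + b)/2) = Real.exp (a/2) * Real.exp (b/2) := by
      rw [← Real.exp_add]; ring_nf
    have h2 : Real.exp a = Real.exp (a/2) ^ 2 := by
      rw [sq, ← Real.exp_add]; ring_nf
    have h3 : Real.exp b = Real.exp (b/2) ^ 2 := by
      rw [sq, ← Real.exp_add]; ring_nf
    rw [h1, h2, h3]
    nlinarith [sq_nonneg (Real.exp (a/2) - Real.exp (b/2))]
  have hexpD : Real.exp (-D) < 1 := by
    rw [Real.exp_lt_one_iff]; linarith
  have hg0 : ∀ x, 0 ≤ g x := by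
    intro x
    rw [hg]
    simp only
    have hK := hKmid x
    have hKe : Real.exp (-(dot mid x) + nrm mid ^ 2 / 2) =
        Real.exp (((-(dot θ₁ x) + nrm θ₁ ^ 2 / 2) + (-(dot θ₂ x) + nrm θ₂ ^ 2 / 2)) / 2) *
          Real.exp (-D) := by
      rw [hK, sub_eq_add_neg (((-(dot θ₁ x) + nrm θ₁ ^ 2 / 2) +
        (-(dot θ₂ x) + nrm θ₂ ^ 2 / 2)) / 2) D,
        Real.exp_add (((-(dot θ₁ x) + nrm θ₁ ^ 2 / 2) + (-(dot θ₂ x) + nrm θ₂ ^ 2 / 2)) / 2) (-D)]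
    rw [hKe]
    have h1 := hamgm x
    have hfx : (0:ℝ) ≤ f x ^ 2 := sq_nonneg _
    have h2 : Real.exp (((-(dot θ₁ x) + nrm θ₁ ^ 2 / 2) +
        (-(dot θ₂ x) + nrm θ₂ ^ 2 / 2)) / 2) * Real.exp (-D) ≤
        1/2 * Real.exp (-(dot θ₁ x) + nrm θ₁ ^ 2 / 2) +
        1/2 * Real.exp (-(dot θ₂ x) + nrm θ₂ ^ 2 / 2) := by
      refine le_trans (mul_le_of_le_one_right (Real.exp_pos _).le hexpD.le) h1
    have h3 := mul_le_mul_of_nonneg_left h2 hfx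
    have h4 : f x ^ 2 * (1/2 * Real.exp (-(dot θ₁ x) + nrm θ₁ ^ 2 / 2) +
        1/2 * Real.exp (-(dot θ₂ x) + nrm θ₂ ^ 2 / 2)) =
        1/2 * (f x ^ 2 * Real.exp (-(dot θ₁ x) + nrm θ₁ ^ 2 / 2)) +
        1/2 * (f x ^ 2 * Real.exp (-(dot θ₂ x) + nrm θ₂ ^ 2 / 2)) := by ring
    linarith
  have hgpos : ∀ x, f x ≠ 0 → 0 < g x := by
    intro x hx
    rw [hg]
    simp only
    have hK := hKmid x
    have hKe : Real.exp (-(dot mid x) + nrm mid ^ 2 / 2) =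
        Real.exp (((-(dot θ₁ x) + nrm θ₁ ^ 2 / 2) + (-(dot θ₂ x) + nrm θ₂ ^ 2 / 2)) / 2) *
          Real.exp (-D) := by
      rw [hK, sub_eq_add_neg (((-(dot θ₁ x) + nrm θ₁ ^ 2 / 2) +
        (-(dot θ₂ x) + nrm θ₂ ^ 2 / 2)) / 2) D,
        Real.exp_add (((-(dot θ₁ x) + nrm θ₁ ^ 2 / 2) + (-(dot θ₂ x) + nrm θ₂ ^ 2 / 2)) / 2) (-D)]
    rw [hKe]
    have h1 := hamgm x
    have hfx : (0:ℝ) < f x ^ 2 := by positivity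
    have h2 : Real.exp (((-(dot θ₁ x) + nrm θ₁ ^ 2 / 2) +
        (-(dot θ₂ x) + nrm θ₂ ^ 2 / 2)) / 2) * Real.exp (-D) <
        1/2 * Real.exp (-(dot θ₁ x) + nrm θ₁ ^ 2 / 2) +
        1/2 * Real.exp (-(dot θ₂ x) + nrm θ₂ ^ 2 / 2) := by
      refine lt_of_lt_of_le ?_ h1
      have := Real.exp_pos (((-(dot θ₁ x) + nrm θ₁ ^ 2 / 2) +
        (-(dot θ₂ x) + nrm θ₂ ^ 2 / 2)) / 2)
      nlinarith
    have h3 := mul_lt_mul_of_pos_left h2 hfx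
    have h4 : f x ^ 2 * (1/2 * Real.exp (-(dot θ₁ x) + nrm θ₁ ^ 2 / 2) +
        1/2 * Real.exp (-(dot θ₂ x) + nrm θ₂ ^ 2 / 2)) =
        1/2 * (f x ^ 2 * Real.exp (-(dot θ₁ x) + nrm θ₁ ^ 2 / 2)) +
        1/2 * (f x ^ 2 * Real.exp (-(dot θ₂ x) + nrm θ₂ ^ 2 / 2)) := by ring
    linarith
  have hI1 := integrable_vF_integrand h02 θ₁
  have hI2 := integrable_vF_integrand h02 θ₂
  have hIm := integrable_vF_integrand h02 mid
  have hgInt : Integrable g (stdGaussian d) :=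
    ((hI1.const_mul _).add (hI2.const_mul _)).sub hIm
  have hgval : ∫ x, g x ∂ stdGaussian d =
      1/2 * vF f θ₁ + 1/2 * vF f θ₂ - vF f mid := by
    rw [hg]
    calc ∫ x, (1/2 * (f x ^ 2 * Real.exp (-(dot θ₁ x) + nrm θ₁ ^ 2 / 2)) +
          1/2 * (f x ^ 2 * Real.exp (-(dot θ₂ x) + nrm θ₂ ^ 2 / 2)) -
          f x ^ 2 * Real.exp (-(dot mid x) + nrm mid ^ 2 / 2)) ∂ stdGaussian d =
        (∫ x, (1/2 * (f x ^ 2 * Real.exp (-(dot θ₁ x) + nrm θ₁ ^ 2 / 2)) +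
          1/2 * (f x ^ 2 * Real.exp (-(dot θ₂ x) + nrm θ₂ ^ 2 / 2))) ∂ stdGaussian d) -
        ∫ x, f x ^ 2 * Real.exp (-(dot mid x) + nrm mid ^ 2 / 2) ∂ stdGaussian d :=
          integral_sub ((hI1.const_mul _).add (hI2.const_mul _)) hIm
    _ = (∫ x, 1/2 * (f x ^ 2 * Real.exp (-(dot θ₁ x) + nrm θ₁ ^ 2 / 2)) ∂ stdGaussian d) +
        (∫ x, 1/2 * (f x ^ 2 * Real.exp (-(dot θ₂ x) + nrm θ₂ ^ 2 / 2)) ∂ stdGaussian d) -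
        ∫ x, f x ^ 2 * Real.exp (-(dot mid x) + nrm mid ^ 2 / 2) ∂ stdGaussian d := by
          rw [integral_add (hI1.const_mul _) (hI2.const_mul _)]
    _ = 1/2 * vF f θ₁ + 1/2 * vF f θ₂ - vF f mid := by
          rw [MeasureTheory.integral_const_mul, MeasureTheory.integral_const_mul]
          rfl
  have hgne : ∫ x, g x ∂ stdGaussian d ≠ 0 := by
    intro hzero
    have := (integral_eq_zero_iff_of_nonneg (fun x => hg0 x) hgInt).mp hzero
    rw [Filter.EventuallyEq, ae_iff] at this
    have hsub : {x | f x ≠ 0} ⊆ {x | ¬ g x = (0 : (Fin d → ℝ) → ℝ) x} := by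
      intro x hx
      simp only [Set.mem_setOf_eq, Pi.zero_apply]
      exact ne_of_gt (hgpos x hx)
    have := measure_mono_null hsub this
    exact absurd this (ne_of_gt h01)
  have hgnn : 0 ≤ ∫ x, g x ∂ stdGaussian d := integral_nonneg hg0
  have : 0 < ∫ x, g x ∂ stdGaussian d := lt_of_le_of_ne hgnn (Ne.symm hgne)
  rw [hgval] at this
  linarith

end aux

/-- Under (0.1) and (0.2), `c := inf_θ v^f(θ) > 0`, the Hessian of `v^f` dominates `c I_d`
(strong convexity), `v^f(θ) → ∞` as `|θ| → ∞`, and `v^f` has a unique minimizer. -/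
theorem stmt1 {d : ℕ} (f : (Fin d → ℝ) → ℝ) (hf : Measurable f)
    (h01 : 0 < stdGaussian d {x | f x ≠ 0})
    (h02 : ∀ θ : Fin d → ℝ,
      Integrable (fun x => f x ^ 2 * Real.exp (-(dot θ x))) (stdGaussian d)) :
    (0 < ⨅ θ : Fin d → ℝ, vF f θ) ∧
    (∀ θ u : Fin d → ℝ,
      (⨅ θ' : Fin d → ℝ, vF f θ') * nrm u ^ 2 ≤
        fderiv ℝ (fun θ' => fderiv ℝ (vF f) θ' u) θ u) ∧
    Tendsto (vF f) (Filter.comap nrm atTop) atTop ∧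
    (∃! θs : Fin d → ℝ, ∀ θ, vF f θs ≤ vF f θ) := by
  obtain ⟨κ, hκ, R, hR, hbd⟩ := vF_lower hf h01 h02
  have hBdd : BddBelow (Set.range (vF f)) := by
    refine ⟨0, ?_⟩
    rintro y ⟨θ, rfl⟩
    exact vF_nonneg θ
  refine ⟨?_, ?_, ?_, ?_⟩
  · have hlb : ∀ θ : Fin d → ℝ, κ * Real.exp (-(R^2)/2) ≤ vF f θ := by
      intro θ
      refine le_trans ?_ (hbd θ)
      refine mul_le_mul_of_nonneg_left (Real.exp_le_exp.mpr ?_) hκ.le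
      nlinarith [sq_nonneg (nrm θ - R)]
    have hpos : (0:ℝ) < κ * Real.exp (-(R^2)/2) := by positivity
    exact lt_of_lt_of_le hpos (le_ciInf hlb)
  · intro θ u
    have h1 : (⨅ θ' : Fin d → ℝ, vF f θ') ≤ vF f θ := ciInf_le hBdd θ
    have h2 := hessian_ge hf h02 θ u
    have h3 : (⨅ θ' : Fin d → ℝ, vF f θ') * nrm u ^ 2 ≤ vF f θ * nrm u ^ 2 :=
      mul_le_mul_of_nonneg_right h1 (sq_nonneg _)
    linarith
  · rw [tendsto_atTop]
    intro M
    have hmem : (nrm : (Fin d → ℝ) → ℝ) ⁻¹' (Set.Ici (max (2*R+2) (M/κ))) ∈ Filter.comap nrm atTop :=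
      Filter.preimage_mem_comap (mem_atTop _)
    filter_upwards [hmem] with θ hθ
    have := vF_large_of_nrm_large hf hκ hR hbd M θ hθ
    linarith
  · have hcont : Continuous (vF f) :=
      continuous_iff_continuousAt.mpr fun θ => (hasFDerivAt_vF hf h02 θ).continuousAt
    set r := max (2*R+2) ((vF f 0)/κ) with hr
    have hr0 : (0:ℝ) ≤ r := le_trans (by linarith) (le_max_left _ _)
    obtain ⟨θs, hθsmem, hmin⟩ :=
      (isCompact_closedBall (0 : Fin d → ℝ) r).exists_isMinOn
        ⟨0, Metric.mem_closedBall_self hr0⟩ hcont.continuousOn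
    have hglobal : ∀ θ : Fin d → ℝ, vF f θs ≤ vF f θ := by
      intro θ
      by_cases hθ : θ ∈ Metric.closedBall (0 : Fin d → ℝ) r
      · exact isMinOn_iff.mp hmin θ hθ
      · have h0 : vF f θs ≤ vF f 0 :=
          isMinOn_iff.mp hmin 0 (Metric.mem_closedBall_self hr0)
        have hlt : r < ‖θ‖ := by
          rw [Metric.mem_closedBall, dist_zero_right] at hθ
          exact lt_of_not_ge hθ
        have hnrm : r ≤ nrm θ := le_trans hlt.le (pi_norm_le_nrm θ)
        have := vF_large_of_nrm_large hf hκ hR hbd (vF f 0) θ hnrm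
        linarith
    refine ⟨θs, hglobal, ?_⟩
    intro y hy
    by_contra hne
    have heq : vF f y = vF f θs := le_antisymm (hy θs) (hglobal y)
    have hmid := vF_midpoint_lt hf h01 h02 hne
    have h1 := hy ((1/2 : ℝ) • y + (1/2 : ℝ) • θs)
    linarith

end
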